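/- Let V be a finite type with n = |V| ≥ 1 and let F be a nonempty superset-closed family of finsets of V. Then every vertex of the TAR graph of F has degree at most n, and the maximum degree of the TAR graph of F equals n if and only if every subset of V of cardinality n − 1 belongs to F. -/

import Mathlib

variable {V : Type*} [Fintype V] [DecidableEq V]

/-- A family of finsets is superset-closed if it is closed under taking supersets. -/
def SupersetClosed (F : Finset (Finset V)) : Prop :=
  ∀ ⦃S T : Finset V⦄, S ∈ F → S ⊆ T → T ∈ F

/-- A minimal member of a family: a member no proper subset of which is a member. -/
def IsMinimalMem (F : Finset (Finset V)) (M : Finset V) : Prop :=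
  M ∈ F ∧ ∀ M' : Finset V, M' ⊂ M → M' ∉ F

/-- The TAR graph of a family of finsets: vertices are the members of the family,
two members being adjacent iff their symmetric difference has exactly one element. -/
def TARGraph (F : Finset (Finset V)) : SimpleGraph {S : Finset V // S ∈ F} where
  Adj S T := (symmDiff S.1 T.1).card = 1
  symm := ⟨fun S T h => by change (symmDiff S.1 T.1).card = 1 at h; show (symmDiff T.1 S.1).card = 1; rwa [symmDiff_comm] at h⟩
  loopless := ⟨fun S h => by change (symmDiff S.1 S.1).card = 1 at h; simp [symmDiff_self] at h⟩

instance (F : Finset (Finset V)) : DecidableRel (TARGraph F).Adj :=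
  fun S T => inferInstanceAs (Decidable ((symmDiff S.1 T.1).card = 1))

lemma tar_adj_iff (F : Finset (Finset V)) (S T : {S : Finset V // S ∈ F}) :
    (TARGraph F).Adj S T ↔ ∃ v, T.1 = symmDiff S.1 {v} := by
  constructor
  · intro h
    obtain ⟨v, hv⟩ := Finset.card_eq_one.mp h
    exact ⟨v, by rw [← hv, symmDiff_symmDiff_cancel_left]⟩
  · rintro ⟨v, hv⟩
    have h1 : symmDiff S.1 T.1 = {v} := by
      rw [hv, symmDiff_symmDiff_cancel_left]
    show (symmDiff S.1 T.1).card = 1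
    rw [h1, Finset.card_singleton]

theorem stmt1 (F : Finset (Finset V)) (hne : F.Nonempty) (hsup : SupersetClosed F)
    (hn : 1 ≤ Fintype.card V) :
    (∀ S : {S : Finset V // S ∈ F}, (TARGraph F).degree S ≤ Fintype.card V) ∧
    ((TARGraph F).maxDegree = Fintype.card V ↔
      ∀ S : Finset V, S.card = Fintype.card V - 1 → S ∈ F) := by
  classical
  have hV : Nonempty V := Fintype.card_pos_iff.mp hn
  -- the "label" of a neighbor: the unique element of the symmetric difference
  set f : {S : Finset V // S ∈ F} → {S : Finset V // S ∈ F} → V := fun S T =>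
    if h : (symmDiff S.1 T.1).Nonempty then h.choose
    else Classical.arbitrary V with hf
  have hkey : ∀ S T, (TARGraph F).Adj S T → symmDiff S.1 T.1 = {f S T} := by
    intro S T h
    obtain ⟨v, hv⟩ := Finset.card_eq_one.mp h
    have hne' : (symmDiff S.1 T.1).Nonempty := ⟨v, by simp [hv]⟩
    simp only [hf, dif_pos hne']
    have huniq : ∀ x ∈ symmDiff S.1 T.1, x = v := by
      intro x hx
      rw [hv] at hx
      simpa using hx
    rw [huniq _ hne'.choose_spec]
    exact hv
  have hinj : ∀ S : {S : Finset V // S ∈ F},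
      Set.InjOn (f S) ((TARGraph F).neighborFinset S : Set _) := by
    intro S T hT T' hT' hEq
    have h1 := hkey S T (((TARGraph F).mem_neighborFinset S T).mp (Finset.mem_coe.mp hT))
    have h2 := hkey S T' (((TARGraph F).mem_neighborFinset S T').mp (Finset.mem_coe.mp hT'))
    have : symmDiff S.1 T.1 = symmDiff S.1 T'.1 := by rw [h1, h2, hEq]
    have := symmDiff_right_injective S.1 this
    exact Subtype.ext this
  have hdeg : ∀ S : {S : Finset V // S ∈ F}, (TARGraph F).degree S ≤ Fintype.card V := by
    intro S
    rw [← SimpleGraph.card_neighborFinset_eq_degree, ← Finset.card_univ]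
    exact Finset.card_le_card_of_injOn (f S) (fun _ _ => Finset.mem_univ _) (hinj S)
  refine ⟨hdeg, ?_, ?_⟩
  · -- forward direction
    intro hmax T hT
    have : Nonempty {S : Finset V // S ∈ F} := ⟨⟨hne.choose, hne.choose_spec⟩⟩
    obtain ⟨S, hS⟩ := (TARGraph F).exists_maximal_degree_vertex
    rw [hmax] at hS
    -- every S ∆ {v} is in F
    have hall : ∀ v : V, symmDiff S.1 {v} ∈ F := by
      intro v
      have himg : ((TARGraph F).neighborFinset S).image (f S) = Finset.univ := by
        apply Finset.eq_univ_of_card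
        rw [Finset.card_image_of_injOn (hinj S),
          SimpleGraph.card_neighborFinset_eq_degree]
        exact hS.symm
      have hv : v ∈ ((TARGraph F).neighborFinset S).image (f S) := by
        rw [himg]; exact Finset.mem_univ v
      obtain ⟨T', hT', hTv⟩ := Finset.mem_image.mp hv
      have hadj := ((TARGraph F).mem_neighborFinset S T').mp hT'
      have := hkey S T' hadj
      rw [hTv] at this
      have : T'.1 = symmDiff S.1 {v} := by
        rw [← this, symmDiff_symmDiff_cancel_left]
      rw [← this]; exact T'.2
    -- find the missing element of T
    have hTne : T ≠ Finset.univ := by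
      intro h
      rw [h, Finset.card_univ] at hT
      omega
    obtain ⟨v, hv⟩ : ∃ v, v ∉ T := by
      by_contra h
      push_neg at h
      exact hTne (Finset.eq_univ_iff_forall.mpr h)
    have hTeq : T = Finset.univ.erase v := by
      apply Finset.eq_of_subset_of_card_le
      · intro x hx
        exact Finset.mem_erase.mpr ⟨fun h => hv (h ▸ hx), Finset.mem_univ x⟩
      · rw [Finset.card_erase_of_mem (Finset.mem_univ v), Finset.card_univ, hT]
    by_cases hvS : v ∈ S.1
    · have hsub : symmDiff S.1 {v} ⊆ T := by
        have : symmDiff S.1 {v} = S.1 \ {v} :=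
          symmDiff_of_ge (Finset.singleton_subset_iff.mpr hvS)
        rw [this, hTeq]
        intro x hx
        rw [Finset.mem_sdiff, Finset.mem_singleton] at hx
        exact Finset.mem_erase.mpr ⟨hx.2, Finset.mem_univ x⟩
      exact hsup (hall v) hsub
    · have hsub : S.1 ⊆ T := by
        rw [hTeq]
        intro x hx
        exact Finset.mem_erase.mpr ⟨fun h => hvS (h ▸ hx), Finset.mem_univ x⟩
      exact hsup S.2 hsub
  · -- backward direction
    intro hall
    have hU : (Finset.univ : Finset V) ∈ F := hsup hne.choose_spec (Finset.subset_univ _)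
    set U : {S : Finset V // S ∈ F} := ⟨Finset.univ, hU⟩ with hUdef
    have hmem : ∀ v : V, (Finset.univ : Finset V) \ {v} ∈ F := by
      intro v
      apply hall
      rw [Finset.card_sdiff_of_subset (Finset.subset_univ _), Finset.card_singleton, Finset.card_univ]
    have hadj : ∀ v : V, (TARGraph F).Adj U ⟨Finset.univ \ {v}, hmem v⟩ := by
      intro v
      show (symmDiff (Finset.univ : Finset V) (Finset.univ \ {v})).card = 1
      rw [symmDiff_of_ge (Finset.sdiff_subset), Finset.sdiff_sdiff_self_left,
        Finset.univ_inter, Finset.card_singleton]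
    have hdegU : Fintype.card V ≤ (TARGraph F).degree U := by
      rw [← SimpleGraph.card_neighborFinset_eq_degree, ← Finset.card_univ]
      apply Finset.card_le_card_of_injOn
        (fun v => (⟨Finset.univ \ {v}, hmem v⟩ : {S : Finset V // S ∈ F}))
      · intro v _
        exact ((TARGraph F).mem_neighborFinset U _).mpr (hadj v)
      · intro v _ w _ hEq
        have h1 : (Finset.univ : Finset V) \ {v} = Finset.univ \ {w} :=
          congrArg Subtype.val hEq
        have := congrArg (fun s => (Finset.univ : Finset V) \ s) h1
        simp only [Finset.sdiff_sdiff_self_left, Finset.univ_inter] at this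
        exact Finset.singleton_injective this
    exact le_antisymm ((TARGraph F).maxDegree_le_of_forall_degree_le _ hdeg)
      (le_trans hdegU ((TARGraph F).degree_le_maxDegree U))
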